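/- Let N ≥ 2 be an integer and define the N×N real matrix Q by Q_{k1} = (−1)^{k+1}/√N for k = 1,…,N, and Q_{kj} = √(2/N) · sin( (π(j−1)/N)(k − 1/2) ) for k = 1,…,N and j = 2,…,N. Then Q is orthogonal: Qᵀ Q = I_N. -/

import Mathlib

open Real

lemma sinmulsin (a b : ℝ) : Real.sin a * Real.sin b = (Real.cos (a - b) - Real.cos (a + b)) / 2 := by
  rw [Real.cos_sub_cos]
  ring_nf
  rw [Real.sin_neg]
  ring

lemma cos_sum_tel (N : ℕ) (θ : ℝ) (hθ : Real.sin (θ/2) ≠ 0) :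
    ∑ k ∈ Finset.range N, Real.cos (θ * (k + 1/2)) = Real.sin (θ * N) / (2 * Real.sin (θ/2)) := by
  have key : ∀ k : ℕ, Real.sin (θ*(k+1)) - Real.sin (θ*k) = 2 * Real.sin (θ/2) * Real.cos (θ*(k+1/2)) := by
    intro k
    rw [Real.sin_sub_sin]
    have h1 : (θ*(k+1) - θ*k)/2 = θ/2 := by ring
    have h2 : (θ*(k+1) + θ*k)/2 = θ*(k+1/2) := by ring
    rw [h1, h2]
  have tel := Finset.sum_range_sub (fun k : ℕ => Real.sin (θ * k)) N
  have : ∑ k ∈ Finset.range N, (2 * Real.sin (θ/2)) * Real.cos (θ*(k+1/2)) = Real.sin (θ*N) := by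
    calc ∑ k ∈ Finset.range N, (2 * Real.sin (θ/2)) * Real.cos (θ*(k+1/2))
        = ∑ k ∈ Finset.range N, (Real.sin (θ*(k+1)) - Real.sin (θ*k)) := by
          refine Finset.sum_congr rfl fun k _ => ?_
          rw [key k]
      _ = Real.sin (θ*N) - Real.sin (θ*0) := by
          simpa using tel
      _ = Real.sin (θ*N) := by simp
  rw [← Finset.mul_sum] at this
  rw [eq_div_iff (by simpa using hθ)]
  linarith [this]

lemma cos_sum_int (N : ℕ) (hN : 0 < N) (m : ℤ) (hm : m ≠ 0) (hm2 : |m| < 2*N) :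
    ∑ k ∈ Finset.range N, Real.cos (Real.pi * m / N * (k + 1/2)) = 0 := by
  have hNR : (N:ℝ) ≠ 0 := Nat.cast_ne_zero.mpr hN.ne'
  set θ : ℝ := Real.pi * m / N with hθdef
  have hs : Real.sin (θ/2) ≠ 0 := by
    rw [ne_eq, Real.sin_eq_zero_iff]
    rintro ⟨n, hn⟩
    have hn' : (m : ℝ) = 2 * N * n := by
      have hπ : Real.pi ≠ 0 := Real.pi_ne_zero
      field_simp [hθdef] at hn
      have h2 : Real.pi * (m:ℝ) = Real.pi * (2*N*n) := by rw [hθdef, eq_div_iff hNR] at hn; linear_combination -hn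
      exact mul_left_cancel₀ hπ h2
    have : m = 2 * (N:ℤ) * n := by exact_mod_cast hn'
    rcases eq_or_ne n 0 with h0 | h0
    · exact hm (by simp [this, h0])
    · have h1 : (1:ℤ) ≤ |n| := Int.one_le_abs h0
      have : (2*(N:ℤ)) ≤ |m| := by
        calc (2*(N:ℤ)) = 2*N*1 := by ring
        _ ≤ 2*N*|n| := by
            have : (0:ℤ) ≤ 2*N := by positivity
            exact mul_le_mul_of_nonneg_left h1 this
        _ = |m| := by rw [this]; rw [abs_mul]; congr 1; rw [abs_of_nonneg (by positivity)]
      omega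
  have := cos_sum_tel N θ hs
  rw [this]
  have : θ * N = m * Real.pi := by rw [hθdef, div_mul_cancel₀ _ hNR]; ring
  rw [this, Real.sin_int_mul_pi, zero_div]

lemma sum_sin_sin (N : ℕ) (hN : 0 < N) (a b : ℕ) (ha : 1 ≤ a) (hb : 1 ≤ b)
    (hab : a + b < 2*N) :
    ∑ k ∈ Finset.range N, Real.sin (Real.pi*a/N*(k+1/2)) * Real.sin (Real.pi*b/N*(k+1/2))
      = if a = b then (N:ℝ)/2 else 0 := by
  have hNR : (N:ℝ) ≠ 0 := Nat.cast_ne_zero.mpr hN.ne'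
  have hpt : ∀ k : ℕ, Real.sin (Real.pi*a/N*(k+1/2)) * Real.sin (Real.pi*b/N*(k+1/2))
      = (Real.cos (Real.pi*(((a:ℤ)-(b:ℤ) : ℤ):ℝ)/N*(k+1/2))
          - Real.cos (Real.pi*(((a:ℤ)+(b:ℤ) : ℤ):ℝ)/N*(k+1/2)))/2 := by
    intro k
    rw [sinmulsin]
    congr 2
    · push_cast; field_simp
    · push_cast; field_simp
  rw [Finset.sum_congr rfl (fun k _ => hpt k)]
  rw [← Finset.sum_div, Finset.sum_sub_distrib]
  have hsum2 : ∑ k ∈ Finset.range N, Real.cos (Real.pi*(((a:ℤ)+(b:ℤ) : ℤ):ℝ)/N*(k+1/2)) = 0 :=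
    cos_sum_int N hN ((a:ℤ)+(b:ℤ)) (by positivity)
      (by rw [abs_of_pos (by positivity)]; exact_mod_cast hab)
  rw [hsum2]
  by_cases hab' : a = b
  · have h0 : ((a:ℤ)-(b:ℤ)) = 0 := by omega
    rw [h0]
    simp [hab']
  · have hsum1 : ∑ k ∈ Finset.range N, Real.cos (Real.pi*(((a:ℤ)-(b:ℤ) : ℤ):ℝ)/N*(k+1/2)) = 0 :=
      cos_sum_int N hN ((a:ℤ)-(b:ℤ)) (by omega) (by rw [abs_sub_lt_iff]; constructor <;> omega)
    rw [hsum1]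
    simp [hab']

lemma neg_one_pow_eq_sin (N : ℕ) (hN : 0 < N) (k : ℕ) :
    ((-1:ℝ))^k = Real.sin (Real.pi*(N:ℝ)/N*(k+1/2)) := by
  have hNR : (N:ℝ) ≠ 0 := Nat.cast_ne_zero.mpr hN.ne'
  have h1 : Real.pi*(N:ℝ)/N*(k+1/2) = k*Real.pi + Real.pi/2 := by field_simp
  rw [h1, Real.sin_add_pi_div_two]
  simpa using (Real.cos_nat_mul_pi_sub 0 k).symm


/-- The matrix `Q` of discrete translation modes, with first column the alternating
vector `(1,−1,…,(−1)^{N+1})/√N` and remaining columns the discrete sine modes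
`√(2/N) sin(π(j−1)(k−1/2)/N)`, is orthogonal: `Qᵀ Q = I`. -/
theorem stmt_11 (N : ℕ) (hN : 2 ≤ N)
    (Q : Matrix (Fin N) (Fin N) ℝ)
    (hQ : ∀ k j : Fin N, Q k j =
      if (j : ℕ) = 0 then (-1 : ℝ) ^ (k : ℕ) / Real.sqrt N
      else Real.sqrt (2 / N) * Real.sin (Real.pi * (j : ℝ) / N * ((k : ℝ) + 1/2))) :
    Q.transpose * Q = 1 := by
  have hN0 : 0 < N := by omega
  have hNR : (0:ℝ) < N := by exact_mod_cast hN0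
  apply Matrix.ext; intro i j
  have hiN : (i:ℕ) < N := i.isLt
  have hjN : (j:ℕ) < N := j.isLt
  rw [Matrix.mul_apply, Matrix.one_apply]
  simp only [Matrix.transpose_apply]
  have hconv : ∑ k : Fin N, Q k i * Q k j = ∑ k ∈ Finset.range N,
      ((if (i:ℕ) = 0 then (-1:ℝ)^(k:ℕ) / Real.sqrt N
          else Real.sqrt (2/N) * Real.sin (Real.pi * ((i:ℕ):ℝ)/N*((k:ℕ)+1/2))) *
       (if (j:ℕ) = 0 then (-1:ℝ)^(k:ℕ) / Real.sqrt N
          else Real.sqrt (2/N) * Real.sin (Real.pi * ((j:ℕ):ℝ)/N*((k:ℕ)+1/2)))) := by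
    rw [← Fin.sum_univ_eq_sum_range]
    exact Finset.sum_congr rfl fun k _ => by rw [hQ k i, hQ k j]
  rw [hconv]
  by_cases hi : (i:ℕ) = 0 <;> by_cases hj : (j:ℕ) = 0
  · -- both first column
    have hij : i = j := Fin.ext (by omega)
    rw [if_pos hij]
    simp only [hi, hj, eq_self_iff_true, if_true]
    have hterm : ∀ k ∈ Finset.range N, (-1:ℝ)^k/Real.sqrt N * ((-1)^k/Real.sqrt N) = 1/N := by
      intro k _
      rw [div_mul_div_comm, ← pow_add, ← two_mul, pow_mul, Real.mul_self_sqrt hNR.le]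
      norm_num
    rw [Finset.sum_congr rfl hterm, Finset.sum_const, Finset.card_range]
    field_simp
    rw [nsmul_eq_mul, mul_one_div_cancel hNR.ne']
  · -- i first column, j sine
    have hij : i ≠ j := fun h => hj (by rw [← h]; exact hi)
    rw [if_neg hij]
    simp only [hi, hj, eq_self_iff_true, if_true, if_false]
    have hterm : ∀ k ∈ Finset.range N, (-1:ℝ)^k/Real.sqrt N *
        (Real.sqrt (2/N) * Real.sin (Real.pi*((j:ℕ):ℝ)/N*(k+1/2)))
        = (Real.sqrt (2/N)/Real.sqrt N) *
          (Real.sin (Real.pi*(N:ℝ)/N*(k+1/2)) * Real.sin (Real.pi*((j:ℕ):ℝ)/N*(k+1/2))) := by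
      intro k _
      rw [← neg_one_pow_eq_sin N hN0 k]; ring
    rw [Finset.sum_congr rfl hterm, ← Finset.mul_sum]
    have h2 : ∑ k ∈ Finset.range N,
        Real.sin (Real.pi*(N:ℝ)/N*(k+1/2)) * Real.sin (Real.pi*((j:ℕ):ℝ)/N*(k+1/2)) = 0 := by
      have := sum_sin_sin N hN0 N (j:ℕ) (by omega) (by omega) (by omega)
      rw [this, if_neg (by omega)]
    rw [h2, mul_zero]
  · -- j first column, i sine
    have hij : i ≠ j := fun h => hi (by rw [h]; exact hj)
    rw [if_neg hij]
    simp only [hi, hj, eq_self_iff_true, if_true, if_false]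
    have hterm : ∀ k ∈ Finset.range N,
        (Real.sqrt (2/N) * Real.sin (Real.pi*((i:ℕ):ℝ)/N*(k+1/2))) * ((-1:ℝ)^k/Real.sqrt N)
        = (Real.sqrt (2/N)/Real.sqrt N) *
          (Real.sin (Real.pi*((i:ℕ):ℝ)/N*(k+1/2)) * Real.sin (Real.pi*(N:ℝ)/N*(k+1/2))) := by
      intro k _
      rw [← neg_one_pow_eq_sin N hN0 k]; ring
    rw [Finset.sum_congr rfl hterm, ← Finset.mul_sum]
    have h2 : ∑ k ∈ Finset.range N,
        Real.sin (Real.pi*((i:ℕ):ℝ)/N*(k+1/2)) * Real.sin (Real.pi*(N:ℝ)/N*(k+1/2)) = 0 := by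
      have := sum_sin_sin N hN0 (i:ℕ) N (by omega) (by omega) (by omega)
      rw [this, if_neg (by omega)]
    rw [h2, mul_zero]
  · -- both sine columns
    simp only [if_neg hi, if_neg hj]
    have hterm : ∀ k ∈ Finset.range N,
        (Real.sqrt (2/N) * Real.sin (Real.pi*((i:ℕ):ℝ)/N*(k+1/2))) *
        (Real.sqrt (2/N) * Real.sin (Real.pi*((j:ℕ):ℝ)/N*(k+1/2)))
        = (2/N) * (Real.sin (Real.pi*((i:ℕ):ℝ)/N*(k+1/2)) * Real.sin (Real.pi*((j:ℕ):ℝ)/N*(k+1/2))) := by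
      intro k _
      rw [mul_mul_mul_comm, Real.mul_self_sqrt (show (0:ℝ) ≤ 2/N by positivity)]
    rw [Finset.sum_congr rfl hterm, ← Finset.mul_sum,
      sum_sin_sin N hN0 (i:ℕ) (j:ℕ) (by omega) (by omega) (by omega)]
    by_cases hij : (i:ℕ) = (j:ℕ)
    · rw [if_pos hij, if_pos (Fin.ext hij)]
      field_simp
    · rw [if_neg hij, if_neg (fun h => hij (by rw [h])), mul_zero]
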